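/- (Explicit value of the singular integral v₀, Lemma 3.1.) For every γ ≥ 1 and every θ ∈ ℝ, the absolutely convergent improper integral (1/(4π))·∫₀^{2π} ln(M(0)(θ,θ'))·cos(θ'−θ) dθ' (the integrand has only a logarithmic singularity at θ' = θ) equals (1/2)·( −1 + ((1−γ)/(1+γ))·cos(2θ) ) = −(1/(1+γ))·( γcos²θ + sin²θ ). -/

import Mathlib

open Real MeasureTheory Set Filter intervalIntegral Topology

/-- `M(0)(θ,θ') := γ(cos θ − cos θ')² + γ⁻¹(sin θ − sin θ')²`. -/
noncomputable def M0 (γ θ θ' : ℝ) : ℝ :=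
  γ * (Real.cos θ - Real.cos θ') ^ 2 + γ⁻¹ * (Real.sin θ - Real.sin θ') ^ 2

noncomputable def Qf (γ θ u : ℝ) : ℝ :=
  (γ + γ⁻¹)/2 - (γ - γ⁻¹)/2 * Real.cos (2*θ + u)

lemma intInt_neg_log_01 : IntervalIntegrable (fun u : ℝ => -Real.log u) volume 0 1 := by
  apply intervalIntegrable_deriv_of_nonneg (g := fun u => u - u * Real.log u)
  · apply ContinuousOn.sub continuousOn_id
    exact (Real.continuous_mul_log).continuousOn
  · intro x hx
    simp only [min_self, zero_lt_one, min_eq_left, max_eq_right, zero_le_one] at hx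
    have hx0 : x ≠ 0 := by
      simp only [Set.mem_Ioo] at hx
      exact ne_of_gt hx.1
    exact ((hasDerivAt_id x).sub (Real.hasDerivAt_mul_log hx0)).congr_deriv (by simp)
  · intro x hx
    simp only [zero_lt_one, min_eq_left, max_eq_right, zero_le_one, Set.mem_Ioo] at hx
    have := Real.log_nonpos hx.1.le hx.2.le
    linarith

lemma intInt_log (b : ℝ) (hb : 0 < b) : IntervalIntegrable Real.log volume 0 b := by
  have h1 : IntervalIntegrable Real.log volume 0 1 := by
    have := intInt_neg_log_01.neg
    have h2 : (-fun u : ℝ => -Real.log u) = Real.log := by funext x; simp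
    rwa [h2] at this
  rcases le_total b 1 with h | h
  · exact h1.mono_set (by rw [Set.uIcc_of_le hb.le, Set.uIcc_of_le zero_le_one]; exact Set.Icc_subset_Icc le_rfl h)
  · refine h1.trans (intervalIntegrable_log ?_)
    rw [Set.uIcc_of_le h]
    intro h'
    rcases h' with ⟨h0, _⟩
    linarith

lemma sin_lower {t : ℝ} (h1 : 0 ≤ t) (h2 : t ≤ π) : 2/π^2 * (t*(π - t)) ≤ Real.sin t := by
  have hpi := Real.pi_pos
  rcases le_total t (π/2) with h | h
  · have h4 := Real.mul_le_sin h1 h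
    have h5 : 2/π*t - 2/π^2*(t*(π - t)) = 2/π^2*t^2 := by field_simp; ring
    have h6 : 0 ≤ 2/π^2*t^2 := by positivity
    linarith
  · have h3 : Real.sin (π - t) = Real.sin t := Real.sin_pi_sub t
    have h4 := Real.mul_le_sin (x := π - t) (by linarith) (by linarith)
    have h5 : 2/π*(π - t) - 2/π^2*(t*(π - t)) = 2*(π - t)^2/π^2 := by field_simp
    have h6 : 0 ≤ 2*(π - t)^2/π^2 := by positivity
    linarith

lemma intInt_log_sin_half : IntervalIntegrable (fun u : ℝ => Real.log (Real.sin (u/2)))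
    volume 0 (2*π) := by
  have hpi := Real.pi_pos
  have hg : IntervalIntegrable
      (fun u : ℝ => Real.log (2*π^2) - Real.log u - Real.log (2*π - u)) volume 0 (2*π) := by
    apply IntervalIntegrable.sub
    · apply IntervalIntegrable.sub intervalIntegrable_const
      exact intInt_log (2*π) (by positivity)
    · have := (intInt_log (2*π) (by positivity)).comp_sub_left (2*π)
      simpa using this.symm
  apply hg.mono_fun'
  · exact ((Real.measurable_log.comp (Real.measurable_sin.comp
      (measurable_id.div_const 2))).aestronglyMeasurable)
  · rw [Set.uIoc_of_le (by positivity : (0:ℝ) ≤ 2*π)]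
    rw [← Measure.restrict_congr_set Ioo_ae_eq_Ioc]
    filter_upwards [ae_restrict_mem measurableSet_Ioo] with u hu
    rcases hu with ⟨hu0, hu2⟩
    have ht0 : 0 < u/2 := by linarith
    have ht2 : u/2 < π := by linarith
    have hs0 : 0 < Real.sin (u/2) := Real.sin_pos_of_pos_of_lt_pi ht0 ht2
    have hs1 : Real.sin (u/2) ≤ 1 := Real.sin_le_one _
    have hlow : u*(2*π - u)/(2*π^2) ≤ Real.sin (u/2) := by
      have := sin_lower (t := u/2) (by linarith) (by linarith)
      have he : 2/π^2 * (u/2*(π - u/2)) = u*(2*π - u)/(2*π^2) := by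
        field_simp
      linarith [he ▸ this]
    have hlowpos : 0 < u*(2*π - u)/(2*π^2) := by
      apply div_pos; nlinarith; positivity
    have hlog : Real.log (u*(2*π - u)/(2*π^2)) ≤ Real.log (Real.sin (u/2)) :=
      Real.log_le_log hlowpos hlow
    have hexp : Real.log (u*(2*π - u)/(2*π^2)) =
        Real.log u + Real.log (2*π - u) - Real.log (2*π^2) := by
      rw [Real.log_div (by nlinarith) (by positivity), Real.log_mul (by linarith) (by nlinarith)]
    simp only [Real.norm_eq_abs]
    rw [abs_of_nonpos (Real.log_nonpos hs0.le hs1)]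
    linarith [hexp ▸ hlog]

lemma intInt_log_sin_sq : IntervalIntegrable (fun u : ℝ => Real.log (Real.sin (u/2)^2))
    volume 0 (2*π) := by
  have h : (fun u : ℝ => Real.log (Real.sin (u/2)^2))
      = fun u => 2 * Real.log (Real.sin (u/2)) := by
    funext u; rw [Real.log_pow]; norm_num
  rw [h]
  exact intInt_log_sin_half.const_mul 2

lemma M0_shift (γ θ u : ℝ) : M0 γ θ (θ + u) = 4 * Real.sin (u/2)^2 * Qf γ θ u := by
  unfold M0 Qf
  have h1 : Real.cos θ - Real.cos (θ+u) = 2 * Real.sin (θ + u/2) * Real.sin (u/2) := by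
    rw [Real.cos_sub_cos]
    rw [show (θ - (θ+u))/2 = -(u/2) by ring, show (θ + (θ+u))/2 = θ + u/2 by ring, Real.sin_neg]
    ring
  have h2 : Real.sin θ - Real.sin (θ+u) = -(2 * Real.sin (u/2) * Real.cos (θ + u/2)) := by
    rw [Real.sin_sub_sin]
    rw [show (θ - (θ+u))/2 = -(u/2) by ring, show (θ + (θ+u))/2 = θ + u/2 by ring, Real.sin_neg]
    ring
  have h3 : Real.cos (2*θ + u) = 1 - 2 * Real.sin (θ + u/2)^2 := by
    rw [show 2*θ + u = 2*(θ + u/2) by ring, Real.cos_two_mul]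
    have := Real.sin_sq_add_cos_sq (θ + u/2)
    linarith
  rw [h1, h2, h3]
  linear_combination (4 * Real.sin (u/2)^2 * γ⁻¹) * Real.sin_sq_add_cos_sq (θ + u/2)

lemma Qf_pos {γ : ℝ} (hγ : 1 ≤ γ) (θ u : ℝ) : 0 < Qf γ θ u := by
  have hγ0 : (0:ℝ) < γ := lt_of_lt_of_le one_pos hγ
  have hi0 : 0 < γ⁻¹ := inv_pos.mpr hγ0
  have hi1 : γ⁻¹ ≤ 1 := by rw [inv_le_one_iff₀]; right; exact hγ
  have hc1 := Real.cos_le_one (2*θ + u)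
  have hc2 := Real.neg_one_le_cos (2*θ + u)
  unfold Qf
  nlinarith

lemma Qf_inv_le {γ : ℝ} (hγ : 1 ≤ γ) (θ u : ℝ) : γ⁻¹ ≤ Qf γ θ u := by
  have hγ0 : (0:ℝ) < γ := lt_of_lt_of_le one_pos hγ
  have hi1 : γ⁻¹ ≤ 1 := by rw [inv_le_one_iff₀]; right; exact hγ
  have hc1 := Real.cos_le_one (2*θ + u)
  have hc2 := Real.neg_one_le_cos (2*θ + u)
  unfold Qf
  nlinarith

lemma Qf_continuous (γ θ : ℝ) : Continuous (Qf γ θ) := by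
  unfold Qf
  fun_prop

lemma periodic_shift_integrable {f : ℝ → ℝ} {T : ℝ} (hT : 0 < T)
    (hf : Function.Periodic f T) {t : ℝ}
    (h : IntervalIntegrable f volume t (t + T)) (s : ℝ) :
    IntervalIntegrable f volume s (s + T) := by
  have hk : ∀ k : ℤ, IntervalIntegrable f volume (t + k*T) (t + (k+1)*T) := by
    intro k
    have h2 := h.comp_sub_right (k*T)
    have h3 : (fun x => f (x - (k:ℝ)*T)) = f := funext fun x => hf.sub_int_mul_eq k
    rw [h3] at h2
    have e1 : t + (k:ℝ)*T = t + k*T := rfl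
    have e2 : t + T + (k:ℝ)*T = t + ((k:ℝ)+1)*T := by ring
    rw [e2] at h2
    exact_mod_cast h2
  set k : ℤ := ⌊(s - t)/T⌋ with hkdef
  have hk1 : (k:ℝ) ≤ (s - t)/T := Int.floor_le _
  have hk2 : (s - t)/T < (k:ℝ) + 1 := Int.lt_floor_add_one _
  have hb1 : t + (k:ℝ)*T ≤ s := by
    have := (le_div_iff₀ hT).mp hk1
    linarith
  have hb2 : s + T ≤ t + ((k:ℝ)+2)*T := by
    have := (div_lt_iff₀ hT).mp hk2
    nlinarith
  have htr : IntervalIntegrable f volume (t + (k:ℝ)*T) (t + ((k:ℝ)+2)*T) := by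
    have h1 := hk k
    have h2 := hk (k+1)
    push_cast at h1 h2
    have := h1.trans (by convert h2 using 2 <;> ring)
    convert this using 2 <;> ring
  apply htr.mono_set
  rw [Set.uIcc_of_le (by linarith), Set.uIcc_of_le (by nlinarith)]
  exact Set.Icc_subset_Icc hb1 hb2

lemma hasDerivAt_psi {γ : ℝ} (hγ : 1 < γ) (x : ℝ) :
    HasDerivAt (fun x => x + 2*Real.arctan ((γ-1)*Real.sin x / ((1+γ) - (γ-1)*Real.cos x)))
      (((γ+γ⁻¹)/2 - (γ-γ⁻¹)/2*Real.cos x)⁻¹) x := by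
  have hγ0 : (0:ℝ) < γ := lt_trans one_pos hγ
  have hc1 := Real.cos_le_one x
  have hc2 := Real.neg_one_le_cos x
  have hpyth := Real.sin_sq_add_cos_sq x
  have hinv : γ * γ⁻¹ = 1 := mul_inv_cancel₀ hγ0.ne'
  have hD : 0 < (1+γ) - (γ-1)*Real.cos x := by nlinarith
  have hE : 0 < (1+γ)^2 + (γ-1)^2 - 2*(γ^2-1)*Real.cos x := by nlinarith
  have hQ : 0 < (γ+γ⁻¹)/2 - (γ-γ⁻¹)/2*Real.cos x := by
    have hi0 : 0 < γ⁻¹ := inv_pos.mpr hγ0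
    have hi1 : γ⁻¹ ≤ 1 := by rw [inv_le_one_iff₀]; right; exact hγ.le
    nlinarith
  have hN : HasDerivAt (fun x => (γ-1)*Real.sin x) ((γ-1)*Real.cos x) x :=
    (Real.hasDerivAt_sin x).const_mul _
  have hDd : HasDerivAt (fun x => (1+γ) - (γ-1)*Real.cos x) ((γ-1)*Real.sin x) x := by
    have := ((Real.hasDerivAt_cos x).const_mul (γ-1)).const_sub (1+γ)
    refine (this).congr_deriv (Eq.symm ?_)
    ring
  have hq := hN.div hDd hD.ne'
  have harc2 : HasDerivAt (fun x => Real.arctan ((γ-1)*Real.sin x / ((1+γ) - (γ-1)*Real.cos x)))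
      ((γ-1)*((1+γ)*Real.cos x - (γ-1)) / ((1+γ)^2 + (γ-1)^2 - 2*(γ^2-1)*Real.cos x)) x := by
    refine (hq.arctan).congr_deriv (Eq.symm ?_)
    simp only [Pi.div_apply]
    have h2 : (0:ℝ) < 1 + ((γ-1)*Real.sin x)^2 / ((1+γ) - (γ-1)*Real.cos x)^2 := by positivity
    have hden : 1 + ((γ-1)*Real.sin x / ((1+γ) - (γ-1)*Real.cos x))^2
        = ((1+γ)^2 + (γ-1)^2 - 2*(γ^2-1)*Real.cos x) / ((1+γ) - (γ-1)*Real.cos x)^2 := by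
      rw [div_pow]
      field_simp
      linear_combination (γ-1)^2 * hpyth
    rw [hden]
    generalize hEg : (1+γ)^2 + (γ-1)^2 - 2*(γ^2-1)*Real.cos x = E at hE ⊢
    field_simp
    linear_combination (γ-1)^2 * hpyth
  have hsum := (hasDerivAt_id x).add (harc2.const_mul 2)
  refine (hsum).congr_deriv (Eq.symm ?_)
  have hE' : (0:ℝ) < 1 + (γ^2 - γ^2*Real.cos x) + Real.cos x := by nlinarith
  have hE'c : (1 + (γ^2 - γ^2*Real.cos x) + Real.cos x) * (1 + (γ^2 - γ^2*Real.cos x) + Real.cos x)⁻¹ = 1 :=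
    mul_inv_cancel₀ hE'.ne'
  field_simp
  linear_combination 4*γ*hE'c

lemma exists_psi {γ : ℝ} (hγ : 1 ≤ γ) (θ : ℝ) :
    ∃ Ψ : ℝ → ℝ, (∀ u, HasDerivAt Ψ
      ((1 + Real.cos u) + (γ-γ⁻¹)/2 * Real.sin (2*θ+u) * Real.sin u / Qf γ θ u) u) ∧
      Ψ (2*π) - Ψ 0 = 2*π + 2*π*((γ-1)/(γ+1))*Real.cos (2*θ) := by
  rcases eq_or_lt_of_le hγ with heq | hlt
  · -- γ = 1
    refine ⟨fun u => u + Real.sin u, fun u => ?_, ?_⟩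
    · have h := (hasDerivAt_id u).add (Real.hasDerivAt_sin u)
      refine (h).congr_deriv (Eq.symm ?_)
      rw [← heq]
      norm_num
    · rw [← heq]
      norm_num [Real.sin_two_pi]
  · -- 1 < γ
    have hγ0 : (0:ℝ) < γ := lt_trans one_pos hlt
    have hi0 : 0 < γ⁻¹ := inv_pos.mpr hγ0
    have hi1 : γ⁻¹ < 1 := by rw [inv_lt_one_iff₀]; right; exact hlt
    obtain ⟨a, ha⟩ : ∃ a : ℝ, a = (γ+γ⁻¹)/2 := ⟨_, rfl⟩
    obtain ⟨b, hb⟩ : ∃ b : ℝ, b = (γ-γ⁻¹)/2 := ⟨_, rfl⟩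
    have hbpos : 0 < b := by rw [hb]; linarith
    have hab : a^2 - b^2 = 1 := by
      rw [ha, hb]
      field_simp
      ring
    have hQpos : ∀ x : ℝ, 0 < a - b * Real.cos x := by
      intro x
      have hc1 := Real.cos_le_one x
      have hc2 := Real.neg_one_le_cos x
      rw [ha, hb]; nlinarith
    set ψ : ℝ → ℝ := fun x => x + 2*Real.arctan ((γ-1)*Real.sin x / ((1+γ) - (γ-1)*Real.cos x))
      with hψdef
    set G1 : ℝ → ℝ := fun x => Real.cos x + (a/b) * Real.log (a - b*Real.cos x) with hG1def
    set G2 : ℝ → ℝ := fun x => Real.sin x + (a/b)*x - (1/b)*ψ x with hG2def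
    have hψderiv : ∀ x, HasDerivAt ψ ((a - b*Real.cos x)⁻¹) x := by
      intro x
      have := hasDerivAt_psi hlt x
      rw [hψdef, ha, hb]
      exact this
    have hG1 : ∀ x, HasDerivAt G1 (b*Real.sin x*Real.cos x/(a - b*Real.cos x)) x := by
      intro x
      have hin : HasDerivAt (fun x => a - b*Real.cos x) (b*Real.sin x) x := by
        have := ((Real.hasDerivAt_cos x).const_mul b).const_sub a
        refine (this).congr_deriv (Eq.symm ?_)
        ring
      have hlog := hin.log (hQpos x).ne'
      have := (Real.hasDerivAt_cos x).add (hlog.const_mul (a/b))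
      refine (this).congr_deriv (Eq.symm ?_)
      field_simp [hbpos.ne', (hQpos x).ne']
      ring
    have hG2 : ∀ x, HasDerivAt G2 (b*Real.sin x^2/(a - b*Real.cos x)) x := by
      intro x
      have h1 : HasDerivAt (fun x : ℝ => (a/b)*x) (a/b) x := by
        simpa using (hasDerivAt_id x).const_mul (a/b)
      have := ((Real.hasDerivAt_sin x).add h1).sub ((hψderiv x).const_mul (1/b))
      refine (this).congr_deriv (Eq.symm ?_)
      simp only [Real.sin_sq]
      field_simp [hbpos.ne', (hQpos x).ne']
      linear_combination (-1 : ℝ) * hab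
    refine ⟨fun u => u + Real.sin u + Real.cos (2*θ) * G2 (2*θ+u)
      - Real.sin (2*θ) * G1 (2*θ+u), fun u => ?_, ?_⟩
    · have hinner : HasDerivAt (fun u : ℝ => 2*θ + u) 1 u := (hasDerivAt_id u).const_add (2*θ)
      have h2 : HasDerivAt (fun u => G2 (2*θ+u))
          (b*Real.sin (2*θ+u)^2/(a - b*Real.cos (2*θ+u))) u := by
        have := (hG2 (2*θ+u)).comp u hinner
        exact this.congr_deriv (by simp)
      have h1 : HasDerivAt (fun u => G1 (2*θ+u))
          (b*Real.sin (2*θ+u)*Real.cos (2*θ+u)/(a - b*Real.cos (2*θ+u))) u := by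
        have := (hG1 (2*θ+u)).comp u hinner
        exact this.congr_deriv (by simp)
      have htot := (((hasDerivAt_id u).add (Real.hasDerivAt_sin u)).add
        (h2.const_mul (Real.cos (2*θ)))).sub (h1.const_mul (Real.sin (2*θ)))
      refine (htot).congr_deriv (Eq.symm ?_)
      have hu : Real.sin u = Real.sin (2*θ+u)*Real.cos (2*θ) - Real.cos (2*θ+u)*Real.sin (2*θ) := by
        have := Real.sin_sub (2*θ+u) (2*θ)
        rw [show 2*θ+u - 2*θ = u by ring] at this
        exact this
      have hQexp : Qf γ θ u = a - b * Real.cos (2*θ+u) := by rw [Qf, ← ha, ← hb]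
      rw [hQexp, ← hb]
      nth_rewrite 1 [hu]
      ring
    · have e1 : G1 (2*θ + 2*π) = G1 (2*θ) := by
        rw [hG1def]
        simp only [Real.cos_add_two_pi]
      have e2 : G2 (2*θ + 2*π) = G2 (2*θ) + (a/b)*(2*π) - (1/b)*(2*π) := by
        rw [hG2def, hψdef]
        simp only [Real.cos_add_two_pi, Real.sin_add_two_pi]
        ring
      have hfinal : (a/b)*(2*π) - (1/b)*(2*π) = 2*π*((γ-1)/(γ+1)) := by
        rw [ha, hb]
        have h1γ : γ + 1 ≠ 0 := by positivity
        have hγ2 : (0:ℝ) < γ^2 - 1 := by nlinarith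
        have hγ2' : (-1 + γ^2 : ℝ) ≠ 0 := by nlinarith
        field_simp [hγ2']
        ring
      show (2*π + Real.sin (2*π) + Real.cos (2*θ) * G2 (2*θ+2*π)
          - Real.sin (2*θ) * G1 (2*θ+2*π))
          - (0 + Real.sin 0 + Real.cos (2*θ) * G2 (2*θ+0) - Real.sin (2*θ) * G1 (2*θ+0))
          = 2*π + 2*π*((γ-1)/(γ+1))*Real.cos (2*θ)
      rw [e1, e2, add_zero]
      rw [Real.sin_two_pi, Real.sin_zero]
      rw [← hfinal]
      ring

lemma sin_half_eq (u : ℝ) : Real.sin u = 2*Real.sin (u/2)*Real.cos (u/2) := by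
  have := Real.sin_two_mul (u/2)
  rw [show 2*(u/2) = u by ring] at this
  exact this

lemma log_M0_split {γ : ℝ} (hγ : 1 ≤ γ) (θ u : ℝ) (hs : Real.sin (u/2) ≠ 0) :
    Real.log (M0 γ θ (θ+u))
      = Real.log (Real.sin (u/2)^2) + Real.log (4*Qf γ θ u) := by
  rw [M0_shift, show 4 * Real.sin (u/2)^2 * Qf γ θ u = Real.sin (u/2)^2 * (4*Qf γ θ u) by ring]
  rw [Real.log_mul (pow_ne_zero 2 hs) (by have := Qf_pos hγ θ u; linarith : (0:ℝ) < 4*Qf γ θ u).ne']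

lemma integrable_u {γ : ℝ} (hγ : 1 ≤ γ) (θ : ℝ) :
    IntervalIntegrable (fun u => Real.log (M0 γ θ (θ+u)) * Real.cos u) volume 0 (2*π) := by
  have hQc := Qf_continuous γ θ
  have h4Q : ∀ u, (0:ℝ) < 4 * Qf γ θ u := fun u => by have := Qf_pos hγ θ u; linarith
  have h1 : IntervalIntegrable (fun u : ℝ => Real.log (Real.sin (u/2)^2) * Real.cos u)
      volume 0 (2*π) :=
    intInt_log_sin_sq.mul_continuousOn Real.continuous_cos.continuousOn
  have h2 : Continuous (fun u : ℝ => Real.log (4 * Qf γ θ u) * Real.cos u) := by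
    apply Continuous.mul _ Real.continuous_cos
    exact ((continuous_const.mul hQc)).log (fun u => (h4Q u).ne')
  have hsum := h1.add (h2.intervalIntegrable 0 (2*π))
  apply hsum.congr_ae
  rw [Set.uIoc_of_le (by positivity : (0:ℝ) ≤ 2*π)]
  rw [← Measure.restrict_congr_set Ioo_ae_eq_Ioc]
  filter_upwards [ae_restrict_mem measurableSet_Ioo] with u hu
  rcases hu with ⟨h0, h2π⟩
  have hs : Real.sin (u/2) ≠ 0 :=
    (Real.sin_pos_of_pos_of_lt_pi (by linarith) (by linarith)).ne'
  rw [log_M0_split hγ θ u hs]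
  ring

lemma W_tendsto {γ : ℝ} (hγ : 1 ≤ γ) (θ : ℝ) {a : ℝ} (ha : Real.sin (a/2) = 0)
    {l : Filter ℝ} (hl : Tendsto (fun u : ℝ => u) l (nhds a))
    (hev : ∀ᶠ u in l, u ∈ Set.Ioo 0 (2*π)) :
    Tendsto (fun u => Real.log (M0 γ θ (θ+u)) * Real.sin u) l (𝓝 0) := by
  have hQc := Qf_continuous γ θ
  have h4Q : ∀ u, (0:ℝ) < 4 * Qf γ θ u := fun u => by have := Qf_pos hγ θ u; linarith
  -- step A
  have hA : Tendsto (fun u : ℝ => Real.sin (u/2)) l (𝓝[>] 0) := by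
    rw [tendsto_nhdsWithin_iff]
    constructor
    · have hc : Continuous (fun u : ℝ => Real.sin (u/2)) :=
        Real.continuous_sin.comp (continuous_id.div_const 2)
      have := (hc.tendsto a).comp hl
      rwa [ha] at this
    · filter_upwards [hev] with u hu
      exact Real.sin_pos_of_pos_of_lt_pi (by linarith [hu.1]) (by linarith [hu.2])
  -- step B
  have hB : Tendsto (fun s : ℝ => Real.log s * s) (𝓝[>] 0) (𝓝 0) := by
    have := tendsto_log_mul_rpow_nhdsGT_zero one_pos
    simpa using this
  have hC : Tendsto (fun u : ℝ => Real.log (Real.sin (u/2)) * Real.sin (u/2)) l (𝓝 0) :=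
    hB.comp hA
  have hT1 : Tendsto (fun u : ℝ => Real.log (Real.sin (u/2)^2) * Real.sin u) l (𝓝 0) := by
    have hcc : Continuous (fun u : ℝ => 4 * Real.cos (u/2)) :=
      continuous_const.mul (Real.continuous_cos.comp (continuous_id.div_const 2))
    have := hC.mul ((hcc.tendsto a).comp hl)
    rw [zero_mul] at this
    apply this.congr
    intro u
    simp only [Function.comp]
    rw [Real.log_pow, sin_half_eq u]
    push_cast
    ring
  have hT2 : Tendsto (fun u : ℝ => Real.log (4 * Qf γ θ u) * Real.sin u) l (𝓝 0) := by
    have hcont : Continuous (fun u : ℝ => Real.log (4 * Qf γ θ u) * Real.sin u) :=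
      (((continuous_const.mul hQc)).log (fun u => (h4Q u).ne')).mul Real.continuous_sin
    have hsa : Real.sin a = 0 := by rw [sin_half_eq a, ha]; ring
    have := (hcont.tendsto a).comp hl
    rw [hsa, mul_zero] at this
    exact this
  have hsum := hT1.add hT2
  rw [add_zero] at hsum
  apply Tendsto.congr' _ hsum
  filter_upwards [hev] with u hu
  have hs : Real.sin (u/2) ≠ 0 :=
    (Real.sin_pos_of_pos_of_lt_pi (by linarith [hu.1]) (by linarith [hu.2])).ne'
  rw [log_M0_split hγ θ u hs]
  ring

lemma key {γ : ℝ} (hγ : 1 ≤ γ) (θ : ℝ) :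
    ∫ u in (0:ℝ)..(2*π), Real.log (M0 γ θ (θ+u)) * Real.cos u
      = -(2*π) - 2*π*((γ-1)/(γ+1))*Real.cos (2*θ) := by
  have hpi := Real.pi_pos
  obtain ⟨Ψ, hΨd, hΨv⟩ := exists_psi hγ θ
  have hint := integrable_u hγ θ
  set Φ : ℝ → ℝ := fun u => Real.log (M0 γ θ (θ+u)) * Real.sin u - Ψ u with hΦdef
  have hderiv : ∀ u ∈ Set.Ioo (0:ℝ) (2*π),
      HasDerivAt Φ (Real.log (M0 γ θ (θ+u)) * Real.cos u) u := by
    intro u hu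
    rcases hu with ⟨h0, h2π⟩
    have hQp := Qf_pos hγ θ u
    have hspos : 0 < Real.sin (u/2) :=
      Real.sin_pos_of_pos_of_lt_pi (by linarith) (by linarith)
    have hmpos : 0 < 4 * Real.sin (u/2)^2 * Qf γ θ u := by positivity
    have hdiv : HasDerivAt (fun u : ℝ => u/2) (1/2) u := (hasDerivAt_id u).div_const 2
    have hsin : HasDerivAt (fun u : ℝ => Real.sin (u/2)) (Real.cos (u/2) * (1/2)) u :=
      by exact (Real.hasDerivAt_sin (u/2)).comp u hdiv
    have hpow : HasDerivAt (fun u : ℝ => Real.sin (u/2)^2)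
        ((2:ℕ) * Real.sin (u/2)^1 * (Real.cos (u/2) * (1/2))) u := hsin.pow 2
    have hcosd : HasDerivAt (fun u : ℝ => Real.cos (2*θ+u)) (-Real.sin (2*θ+u)) u := by
      have := (Real.hasDerivAt_cos (2*θ+u)).comp u ((hasDerivAt_id u).const_add (2*θ))
      exact this.congr_deriv (by simp)
    have hQd : HasDerivAt (fun u => Qf γ θ u) ((γ-γ⁻¹)/2 * Real.sin (2*θ+u)) u := by
      simp only [Qf]
      have := (hcosd.const_mul ((γ-γ⁻¹)/2)).const_sub ((γ+γ⁻¹)/2)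
      refine (this).congr_deriv (Eq.symm ?_)
      ring
    have hm : HasDerivAt (fun u : ℝ => 4 * Real.sin (u/2)^2 * Qf γ θ u)
        (4*Real.sin (u/2)*Real.cos (u/2)*Qf γ θ u
          + 4*Real.sin (u/2)^2*((γ-γ⁻¹)/2 * Real.sin (2*θ+u))) u := by
      have := ((hpow.const_mul 4).mul hQd)
      refine (this).congr_deriv (Eq.symm ?_)
      push_cast
      ring
    have hfeq : (fun u => Real.log (M0 γ θ (θ+u))) =
        fun u => Real.log (4 * Real.sin (u/2)^2 * Qf γ θ u) :=
      funext fun u => by rw [M0_shift]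
    have hΦeq : Φ = fun u => Real.log (4 * Real.sin (u/2)^2 * Qf γ θ u) * Real.sin u - Ψ u := by
      funext v
      rw [hΦdef]
      simp only [M0_shift]
    have hlog := hm.log hmpos.ne'
    have hW := hlog.mul (Real.hasDerivAt_sin u)
    have hΦd := hW.sub (hΨd u)
    rw [hΦeq]
    refine (hΦd).congr_deriv (Eq.symm ?_)
    rw [M0_shift]
    have hcosu : Real.cos u = 1 - 2*Real.sin (u/2)^2 := by
      have h1 := Real.cos_two_mul (u/2)
      rw [show 2*(u/2) = u by ring] at h1
      have h2 := Real.sin_sq_add_cos_sq (u/2)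
      linarith
    rw [sin_half_eq u, hcosu]
    field_simp
    ring_nf
    simp only [Real.cos_sq']
    ring
  have h0 : Tendsto Φ (𝓝[>] (0:ℝ)) (𝓝 (0 - Ψ 0)) := by
    apply Tendsto.sub
    · apply W_tendsto hγ θ (a := 0) (by norm_num) (tendsto_id.mono_right nhdsWithin_le_nhds)
      filter_upwards [Ioo_mem_nhdsGT_of_mem
        (show (0:ℝ) ∈ Set.Ico (0:ℝ) (2*π) from ⟨le_rfl, by positivity⟩)] with u hu
      exact hu
    · exact ((hΨd 0).continuousAt.tendsto).mono_left nhdsWithin_le_nhds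
  have h2 : Tendsto Φ (𝓝[<] (2*π)) (𝓝 (0 - Ψ (2*π))) := by
    apply Tendsto.sub
    · apply W_tendsto hγ θ (by rw [show 2*π/2 = π by ring]; exact Real.sin_pi)
        (tendsto_id.mono_right nhdsWithin_le_nhds)
      filter_upwards [Ioo_mem_nhdsLT_of_mem
        (show (2*π:ℝ) ∈ Set.Ioc (0:ℝ) (2*π) from ⟨by positivity, le_rfl⟩)] with u hu
      exact hu
    · exact ((hΨd (2*π)).continuousAt.tendsto).mono_left nhdsWithin_le_nhds
  have hFTC := intervalIntegral.integral_eq_sub_of_hasDerivAt_of_tendsto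
    (by positivity : (0:ℝ) < 2*π) hderiv hint h0 h2
  rw [hFTC]
  linarith

/-- Explicit value of the singular integral `v₀` (Lemma 3.1). -/
theorem v0_value (γ : ℝ) (hγ : 1 ≤ γ) (θ : ℝ) :
    -- the improper integral is absolutely convergent
    IntervalIntegrable (fun θ' => Real.log (M0 γ θ θ') * Real.cos (θ' - θ))
      volume 0 (2 * π) ∧
    -- its value
    (1 / (4 * π)) * (∫ θ' in (0:ℝ)..(2 * π), Real.log (M0 γ θ θ') * Real.cos (θ' - θ))
      = (1 / 2) * (-1 + ((1 - γ) / (1 + γ)) * Real.cos (2 * θ)) ∧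
    -- the two closed forms agree
    (1 / 2) * (-1 + ((1 - γ) / (1 + γ)) * Real.cos (2 * θ))
      = -(1 / (1 + γ)) * (γ * Real.cos θ ^ 2 + Real.sin θ ^ 2) := by
  have hpi := Real.pi_pos
  set f : ℝ → ℝ := fun θ' => Real.log (M0 γ θ θ') * Real.cos (θ' - θ) with hfdef
  have hper : Function.Periodic f (2*π) := by
    intro x
    rw [hfdef]
    simp only [M0]
    rw [Real.cos_add_two_pi, Real.sin_add_two_pi, show x + 2*π - θ = (x - θ) + 2*π by ring,
      Real.cos_add_two_pi]
  have hcomp : IntervalIntegrable f volume θ (θ + 2*π) := by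
    have h := (integrable_u hγ θ).comp_sub_right θ
    have heq : (fun x => Real.log (M0 γ θ (θ + (x - θ))) * Real.cos (x - θ)) = f := by
      funext x
      rw [hfdef, add_sub_cancel]
    rw [heq] at h
    have : (0:ℝ) + θ = θ := by ring
    rw [this] at h
    have : (2*π:ℝ) + θ = θ + 2*π := by ring
    rwa [this] at h
  have hint : IntervalIntegrable f volume 0 (2*π) := by
    have := periodic_shift_integrable (by positivity) hper hcomp 0
    simpa using this
  have hval : (∫ θ' in (0:ℝ)..(2*π), f θ')
      = -(2*π) - 2*π*((γ-1)/(γ+1))*Real.cos (2*θ) := by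
    have h1 : (∫ θ' in (0:ℝ)..(2*π), f θ') = ∫ x in θ..(θ+2*π), f x := by
      have := hper.intervalIntegral_add_eq 0 θ
      simpa using this
    have h2 : (∫ x in θ..(θ+2*π), f x) = ∫ u in (0:ℝ)..(2*π), f (θ+u) := by
      have := intervalIntegral.integral_comp_add_left (a := 0) (b := 2*π) f θ
      rw [add_zero] at this
      rw [this]
    have h3 : (fun u => f (θ+u)) = fun u => Real.log (M0 γ θ (θ+u)) * Real.cos u := by
      funext u
      rw [hfdef]
      simp only [add_sub_cancel_left]
    rw [h1, h2]
    rw [show (∫ u in (0:ℝ)..(2*π), f (θ+u)) = ∫ u in (0:ℝ)..(2*π),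
      Real.log (M0 γ θ (θ+u)) * Real.cos u by rw [h3]]
    exact key hγ θ
  refine ⟨hint, ?_, ?_⟩
  · rw [hval]
    have h1γ : (1:ℝ) + γ ≠ 0 := by positivity
    have hπ : (π:ℝ) ≠ 0 := hpi.ne'
    have hγ1 : (γ:ℝ) + 1 ≠ 0 := by positivity
    field_simp
    ring
  · have h1γ : (1:ℝ) + γ ≠ 0 := by positivity
    rw [Real.cos_two_mul]
    have hp := Real.sin_sq_add_cos_sq θ
    field_simp
    linear_combination 2 * hp
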